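/- For a smooth function f with ∇f(x) ≠ 0, the maximizer of f over the closed ball B̄_ε(x) satisfies y_max = x + ε ∇f(x)/|∇f(x)| + O(ε²), i.e., the maximum over the ball is attained asymptotically in the gradient direction. -/

import Mathlib

open Metric Asymptotics
local notation "⟪" x ", " y "⟫" => @inner ℝ _ _ x y

theorem taylor_bound_aux {d : ℕ} (f : EuclideanSpace ℝ (Fin d) → ℝ)
    (x : EuclideanSpace ℝ (Fin d)) (hf : ContDiffAt ℝ 2 f x) :
    ∃ r > (0:ℝ), ∃ L > (0:ℝ),
      (∀ a ∈ closedBall x r, ∀ b ∈ closedBall x r,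
        ‖gradient f a - gradient f b‖ ≤ L * ‖a - b‖) ∧
      ∀ a ∈ closedBall x r, ∀ b ∈ closedBall x r,
        |f b - f a - ⟪gradient f a, b - a⟫| ≤ L * ‖b - a‖ ^ 2 := by
  have h1 : ContDiffAt ℝ 1 (fderiv ℝ f) x := hf.fderiv_right (by norm_num)
  obtain ⟨K, t, ht, hK⟩ := h1.exists_lipschitzOnWith
  have h2 : {y | DifferentiableAt ℝ f y} ∈ nhds x := by
    filter_upwards [hf.eventually (by norm_num)] with y hy
    exact hy.differentiableAt (by norm_num)
  obtain ⟨δ, hδ, hball⟩ := Metric.mem_nhds_iff.mp (Filter.inter_mem ht h2)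
  have hsub : ∀ c ∈ closedBall x (δ/2), c ∈ t ∩ {y | DifferentiableAt ℝ f y} := fun c hc =>
    hball (lt_of_le_of_lt (mem_closedBall.mp hc) (by linarith))
  refine ⟨δ/2, by positivity, (K:ℝ) + 1, by positivity, ?_, ?_⟩
  · intro a ha b hb
    have hd := hK.dist_le_mul a (hsub a ha).1 b (hsub b hb).1
    have heq : gradient f a - gradient f b
        = (InnerProductSpace.toDual ℝ _).symm (fderiv ℝ f a - fderiv ℝ f b) := by
      simp [gradient, map_sub]
    rw [heq, LinearIsometryEquiv.norm_map, ← dist_eq_norm, ← dist_eq_norm]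
    calc dist (fderiv ℝ f a) (fderiv ℝ f b) ≤ (K:ℝ) * dist a b := hd
      _ ≤ ((K:ℝ)+1) * dist a b := by nlinarith [dist_nonneg (x := a) (y := b)]
  · intro a ha b hb
    have hseg : segment ℝ a b ⊆ closedBall x (δ/2) :=
      (convex_closedBall x (δ/2)).segment_subset ha hb
    have hders : ∀ z ∈ segment ℝ a b, HasFDerivWithinAt f (fderiv ℝ f z) (segment ℝ a b) z :=
      fun z hz => ((hsub z (hseg hz)).2.hasFDerivAt).hasFDerivWithinAt
    have hbd : ∀ z ∈ segment ℝ a b, ‖fderiv ℝ f z - fderiv ℝ f a‖ ≤ (K:ℝ) * ‖b - a‖ := by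
      intro z hz
      have hza : dist z a ≤ dist b a := by
        have hsub2 : segment ℝ a b ⊆ closedBall a (dist b a) :=
          (convex_closedBall a (dist b a)).segment_subset (mem_closedBall_self dist_nonneg) (mem_closedBall.mpr le_rfl)
        exact mem_closedBall.mp (hsub2 hz)
      calc ‖fderiv ℝ f z - fderiv ℝ f a‖ = dist (fderiv ℝ f z) (fderiv ℝ f a) :=
            (dist_eq_norm _ _).symm
        _ ≤ (K:ℝ) * dist z a := hK.dist_le_mul z (hsub z (hseg hz)).1 a (hsub a ha).1
        _ ≤ (K:ℝ) * dist b a := by gcongr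
        _ = (K:ℝ) * ‖b - a‖ := by rw [dist_eq_norm]
    have hmv := Convex.norm_image_sub_le_of_norm_hasFDerivWithin_le' hders hbd
      (convex_segment a b) (left_mem_segment ℝ a b) (right_mem_segment ℝ a b)
    have hin : (fderiv ℝ f a) (b - a) = ⟪gradient f a, b - a⟫ := by
      simp [gradient, InnerProductSpace.toDual_symm_apply]
    rw [← Real.norm_eq_abs, ← hin]
    calc ‖f b - f a - (fderiv ℝ f a) (b-a)‖ ≤ ((K:ℝ) * ‖b-a‖) * ‖b-a‖ := hmv
      _ ≤ ((K:ℝ)+1) * ‖b-a‖^2 := by nlinarith [norm_nonneg (b-a)]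
theorem stationary_decomp {d : ℕ} (p u : EuclideanSpace ℝ (Fin d)) (hu : u ≠ 0)
    (key : ∀ h : EuclideanSpace ℝ (Fin d), ⟪u, h⟫ < 0 → ⟪p, h⟫ ≤ 0)
    (hpu : 0 ≤ ⟪p, u⟫) : p = (⟪p, u⟫ / ‖u‖ ^ 2) • u := by
  have hun : (0:ℝ) < ‖u‖ := norm_pos_iff.mpr hu
  set μ := ⟪p, u⟫ / ‖u‖ ^ 2 with hμdef
  set P := p - μ • u with hPdef
  have huP : ⟪u, P⟫ = 0 := by
    rw [hPdef, inner_sub_right, real_inner_smul_right, real_inner_self_eq_norm_sq, hμdef,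
      real_inner_comm]
    field_simp
    ring
  have hPp : ⟪p, P⟫ = ‖P‖ ^ 2 := by
    have h7 : p - P = μ • u := by rw [hPdef]; abel
    have h8 : ⟪p - P, P⟫ = μ * ⟪u, P⟫ := by rw [h7, real_inner_smul_left]
    rw [inner_sub_left, huP, mul_zero] at h8
    have h9 : ⟪P, P⟫ = ‖P‖ ^ 2 := real_inner_self_eq_norm_sq P
    linarith
  have hPP : ∀ s > (0:ℝ), ‖P‖ ^ 2 ≤ s * ⟪p, u⟫ := by
    intro s hs
    have h8 : ⟪u, P - s • u⟫ < 0 := by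
      rw [inner_sub_right, real_inner_smul_right, huP, real_inner_self_eq_norm_sq]
      nlinarith [hun, hs, mul_pos hs (pow_pos hun 2)]
    have h9 := key _ h8
    rw [inner_sub_right, real_inner_smul_right, hPp] at h9
    linarith
  have hP0 : P = 0 := by
    have h10 : ‖P‖ ^ 2 ≤ 0 := by
      refine le_of_forall_pos_le_add fun c hc => ?_
      have h11 := hPP (c / (⟪p, u⟫ + 1)) (by positivity)
      rw [zero_add]
      have h12 : (c / (⟪p, u⟫ + 1)) * ⟪p, u⟫ ≤ c := by
        rw [div_mul_eq_mul_div, div_le_iff₀ (by linarith)]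
        nlinarith
      linarith
    have h13 : ‖P‖ = 0 := by nlinarith [norm_nonneg P]
    exact norm_eq_zero.mp h13
  rw [← sub_eq_zero]; exact hP0

set_option maxHeartbeats 2000000 in
/-- For `f` twice continuously differentiable near `x` with `∇f(x) ≠ 0`, any
maximizer `y_max(ε)` of `f` over the closed ball `B̄_ε(x)` satisfies
`y_max(ε) = x + ε ∇f(x)/‖∇f(x)‖ + O(ε²)` as `ε → 0⁺`. -/
theorem max_attained_in_gradient_direction
    (d : ℕ) (f : EuclideanSpace ℝ (Fin d) → ℝ)
    (x : EuclideanSpace ℝ (Fin d))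
    (hf : ContDiffAt ℝ 2 f x) (hgrad : gradient f x ≠ 0)
    (ymax : ℝ → EuclideanSpace ℝ (Fin d))
    (hmem : ∀ ε > (0 : ℝ), ymax ε ∈ closedBall x ε)
    (hmax : ∀ ε > (0 : ℝ), ∀ y ∈ closedBall x ε, f y ≤ f (ymax ε)) :
    (fun ε : ℝ => ymax ε - (x + (ε / ‖gradient f x‖) • gradient f x))
      =O[nhdsWithin 0 (Set.Ioi 0)] (fun ε : ℝ => ε ^ 2) := by
  obtain ⟨r, hr, L, hL, hlip, htay⟩ := taylor_bound_aux f x hf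
  have hG : (0:ℝ) < ‖gradient f x‖ := norm_pos_iff.mpr hgrad
  have hε₀ : (0:ℝ) < min r (‖gradient f x‖ / (8 * L)) := lt_min hr (by positivity)
  rw [isBigO_iff]
  refine ⟨8 * L / ‖gradient f x‖, ?_⟩
  filter_upwards [Ioo_mem_nhdsGT_of_mem ⟨le_refl 0, hε₀⟩] with ε hε
  obtain ⟨hε0, hεε₀⟩ := hε
  have hεr : ε ≤ r := le_trans hεε₀.le (min_le_left _ _)
  have hεG : ε ≤ ‖gradient f x‖ / (8 * L) := le_trans hεε₀.le (min_le_right _ _)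
  have hεG' : L * ε ≤ ‖gradient f x‖ / 8 := by
    rw [le_div_iff₀ (by positivity)] at hεG
    linarith
  have hyb : ymax ε ∈ closedBall x ε := hmem ε hε0
  have hyr : ymax ε ∈ closedBall x r := closedBall_subset_closedBall hεr hyb
  have hxr : x ∈ closedBall x r := mem_closedBall_self hr.le
  have hun : ‖ymax ε - x‖ ≤ ε := by rw [← dist_eq_norm]; exact mem_closedBall.mp hyb
  -- competitor point in the gradient direction
  have hnv : ‖x + (ε / ‖gradient f x‖) • gradient f x - x‖ = ε := by
    rw [add_sub_cancel_left, norm_smul, Real.norm_eq_abs, abs_div,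
      abs_of_nonneg hε0.le, abs_of_pos hG]
    field_simp
  have hvmem : x + (ε / ‖gradient f x‖) • gradient f x ∈ closedBall x ε := by
    rw [mem_closedBall, dist_eq_norm, hnv]
  have hvr : x + (ε / ‖gradient f x‖) • gradient f x ∈ closedBall x r := closedBall_subset_closedBall hεr hvmem
  have hcomp : f (x + (ε / ‖gradient f x‖) • gradient f x) ≤ f (ymax ε) := hmax ε hε0 _ hvmem
  have htay1 := htay x hxr (x + (ε / ‖gradient f x‖) • gradient f x) hvr
  have htay2 := htay x hxr (ymax ε) hyr
  have hinner1 : ⟪gradient f x, x + (ε / ‖gradient f x‖) • gradient f x - x⟫ = ε * ‖gradient f x‖ := by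
    rw [add_sub_cancel_left, real_inner_smul_right, real_inner_self_eq_norm_sq]
    field_simp
  rw [hinner1, hnv] at htay1
  have hinner2 : ⟪gradient f x, ymax ε - x⟫ ≤ ‖gradient f x‖ * ‖ymax ε - x‖ := real_inner_le_norm (gradient f x) _
  -- lower bound  ε ‖gradient f x‖ - 2 L ε² ≤ ‖gradient f x‖ ‖y - x‖
  have hGu : ε * ‖gradient f x‖ - 2 * L * ε ^ 2 ≤ ‖gradient f x‖ * ‖ymax ε - x‖ := by
    have e1 := (abs_le.mp htay1).1
    have e2 := (abs_le.mp htay2).2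
    nlinarith [hun, norm_nonneg (ymax ε - x), hL.le, mul_self_le_mul_self (norm_nonneg (ymax ε - x)) hun]
  have hupos : (0:ℝ) < ‖ymax ε - x‖ := by
    nlinarith [mul_le_mul_of_nonneg_left hεG' hε0.le, hG, hε0, hGu]
  have hu0 : ymax ε - x ≠ 0 := by
    intro h; rw [h, norm_zero] at hupos; exact lt_irrefl 0 hupos
  -- first-order stationarity: directional condition
  have key : ∀ h : EuclideanSpace ℝ (Fin d), ⟪ymax ε - x, h⟫ < 0 →
      ⟪gradient f (ymax ε), h⟫ ≤ 0 := by
    intro h hh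
    have hhne : h ≠ 0 := by
      intro h0; rw [h0, inner_zero_right] at hh; exact lt_irrefl 0 hh
    have hhn : (0:ℝ) < ‖h‖ := norm_pos_iff.mpr hhne
    have main : ∀ c > (0:ℝ), ⟪gradient f (ymax ε), h⟫ ≤ c := by
      intro c hc
      set t := min ((-2 * ⟪ymax ε - x, h⟫) / ‖h‖ ^ 2) (c / (L * ‖h‖ ^ 2)) with htdef
      have ht1 : (0:ℝ) < (-2 * ⟪ymax ε - x, h⟫) / ‖h‖ ^ 2 :=
        div_pos (by nlinarith) (by positivity)
      have htpos : (0:ℝ) < t := lt_min ht1 (div_pos hc (by positivity))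
      have htA : t * ‖h‖ ^ 2 ≤ -2 * ⟪ymax ε - x, h⟫ := by
        have h5 : t ≤ (-2 * ⟪ymax ε - x, h⟫) / ‖h‖ ^ 2 := min_le_left _ _
        rw [le_div_iff₀ (by positivity)] at h5; linarith
      have htB : L * t * ‖h‖ ^ 2 ≤ c := by
        have h5 : t ≤ c / (L * ‖h‖ ^ 2) := min_le_right _ _
        rw [le_div_iff₀ (by positivity)] at h5; nlinarith
      have hrw : ymax ε + t • h - x = (ymax ε - x) + t • h := by abel
      have hmem2 : ymax ε + t • h ∈ closedBall x ε := by
        rw [mem_closedBall, dist_eq_norm, hrw]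
        have hsq : ‖(ymax ε - x) + t • h‖ ^ 2 ≤ ε ^ 2 := by
          rw [norm_add_sq_real, real_inner_smul_right, norm_smul, Real.norm_eq_abs,
            abs_of_pos htpos, mul_pow]
          nlinarith [htA, hun, htpos, norm_nonneg (ymax ε - x)]
        nlinarith [hsq, norm_nonneg ((ymax ε - x) + t • h), hε0]
      have hfle : f (ymax ε + t • h) ≤ f (ymax ε) := hmax ε hε0 _ hmem2
      have hmem3 : ymax ε + t • h ∈ closedBall x r := closedBall_subset_closedBall hεr hmem2
      have htay3 := htay (ymax ε) hyr (ymax ε + t • h) hmem3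
      have hrw2 : ymax ε + t • h - ymax ε = t • h := by abel
      rw [hrw2, real_inner_smul_right, norm_smul, Real.norm_eq_abs, abs_of_pos htpos,
        mul_pow] at htay3
      have e3 := (abs_le.mp htay3).1
      nlinarith [htB, htpos, hfle]
    refine le_of_forall_pos_le_add fun c hc => ?_
    rw [zero_add]; exact main c hc
  -- the gradient at the maximizer is a nonnegative multiple of (y - x)
  have hpu : 0 ≤ ⟪gradient f (ymax ε), ymax ε - x⟫ := by
    have h6 := key (-(ymax ε - x)) (by
      rw [inner_neg_right, real_inner_self_eq_norm_sq]
      nlinarith [hupos])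
    rw [inner_neg_right] at h6; linarith
  have hμ0 : 0 ≤ ⟪gradient f (ymax ε), ymax ε - x⟫ / ‖ymax ε - x‖ ^ 2 :=
    div_nonneg hpu (by positivity)
  have hP : gradient f (ymax ε)
      = (⟪gradient f (ymax ε), ymax ε - x⟫ / ‖ymax ε - x‖ ^ 2) • (ymax ε - x) :=
    stationary_decomp (gradient f (ymax ε)) (ymax ε - x) hu0 key hpu
  -- Lipschitz bound on the gradient
  have hpg : ‖gradient f (ymax ε) - (gradient f x)‖ ≤ L * ε := by
    calc ‖gradient f (ymax ε) - (gradient f x)‖ ≤ L * ‖ymax ε - x‖ := hlip (ymax ε) hyr x hxr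
      _ ≤ L * ε := by nlinarith [hun, hL.le]
  have hbG : |‖gradient f x‖ - ‖gradient f (ymax ε)‖| ≤ L * ε := by
    calc |‖gradient f x‖ - ‖gradient f (ymax ε)‖| ≤ ‖(gradient f x) - gradient f (ymax ε)‖ :=
          abs_norm_sub_norm_le (gradient f x) (gradient f (ymax ε))
      _ = ‖gradient f (ymax ε) - (gradient f x)‖ := norm_sub_rev (gradient f x) _
      _ ≤ L * ε := hpg
  have hpn : ‖gradient f x‖ / 2 ≤ ‖gradient f (ymax ε)‖ := by
    have h14 := (abs_le.mp hbG).2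
    linarith [hεG']
  -- collinearity: ‖p‖ • u = ‖u‖ • p
  have hcol : ‖gradient f (ymax ε)‖ • (ymax ε - x) = ‖ymax ε - x‖ • gradient f (ymax ε) := by
    rw [hP, norm_smul, Real.norm_eq_abs, abs_of_nonneg hμ0, smul_smul, mul_comm]
  have hGne : ‖gradient f x‖ ≠ 0 := hG.ne'
  have hgg : ‖gradient f x‖ * (ε / ‖gradient f x‖) = ε := by field_simp
  have hid : (‖gradient f (ymax ε)‖ * ‖gradient f x‖) • ((ymax ε - x) - (ε / ‖gradient f x‖) • gradient f x)
      = (‖gradient f x‖ * ‖ymax ε - x‖) • (gradient f (ymax ε) - gradient f x)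
        + (‖gradient f x‖ * ‖ymax ε - x‖ - ‖gradient f (ymax ε)‖ * ε) • gradient f x := by
    have h15 : (‖gradient f (ymax ε)‖ * ‖gradient f x‖) • ((ymax ε - x) - (ε / ‖gradient f x‖) • gradient f x)
        = ‖gradient f x‖ • (‖gradient f (ymax ε)‖ • (ymax ε - x))
          - (‖gradient f (ymax ε)‖ * (‖gradient f x‖ * (ε / ‖gradient f x‖))) • gradient f x := by
      module
    rw [h15, hcol, hgg, smul_smul]
    module
  have h9 : |‖gradient f x‖ * ‖ymax ε - x‖ - ‖gradient f (ymax ε)‖ * ε| ≤ 3 * L * ε ^ 2 := by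
    have h10 := abs_le.mp hbG
    rw [abs_le]
    constructor <;> nlinarith [hGu, hun, hε0.le, hL.le, hG.le, h10.1, h10.2]
  have hfinal : ‖(ymax ε - x) - (ε / ‖gradient f x‖) • (gradient f x)‖ * (‖gradient f (ymax ε)‖ * ‖gradient f x‖)
      ≤ 4 * L * ε ^ 2 * ‖gradient f x‖ := by
    have h7 : ‖(‖gradient f (ymax ε)‖ * ‖gradient f x‖) • ((ymax ε - x) - (ε / ‖gradient f x‖) • gradient f x)‖
        = (‖gradient f (ymax ε)‖ * ‖gradient f x‖) * ‖(ymax ε - x) - (ε / ‖gradient f x‖) • (gradient f x)‖ := by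
      rw [norm_smul, Real.norm_eq_abs, abs_of_nonneg (by positivity)]
    have h8 : ‖(‖gradient f x‖ * ‖ymax ε - x‖) • (gradient f (ymax ε) - gradient f x)
          + (‖gradient f x‖ * ‖ymax ε - x‖ - ‖gradient f (ymax ε)‖ * ε) • (gradient f x)‖
        ≤ (‖gradient f x‖ * ‖ymax ε - x‖) * ‖gradient f (ymax ε) - (gradient f x)‖
          + |‖gradient f x‖ * ‖ymax ε - x‖ - ‖gradient f (ymax ε)‖ * ε| * ‖gradient f x‖ := by
      calc ‖(‖gradient f x‖ * ‖ymax ε - x‖) • (gradient f (ymax ε) - gradient f x)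
            + (‖gradient f x‖ * ‖ymax ε - x‖ - ‖gradient f (ymax ε)‖ * ε) • (gradient f x)‖
          ≤ ‖(‖gradient f x‖ * ‖ymax ε - x‖) • (gradient f (ymax ε) - gradient f x)‖
            + ‖(‖gradient f x‖ * ‖ymax ε - x‖ - ‖gradient f (ymax ε)‖ * ε) • (gradient f x)‖ := norm_add_le _ _
        _ = (‖gradient f x‖ * ‖ymax ε - x‖) * ‖gradient f (ymax ε) - (gradient f x)‖
            + |‖gradient f x‖ * ‖ymax ε - x‖ - ‖gradient f (ymax ε)‖ * ε| * ‖gradient f x‖ := by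
            rw [norm_smul, norm_smul, Real.norm_eq_abs, Real.norm_eq_abs,
              abs_of_nonneg (by positivity)]
    calc ‖(ymax ε - x) - (ε / ‖gradient f x‖) • (gradient f x)‖ * (‖gradient f (ymax ε)‖ * ‖gradient f x‖)
        = ‖(‖gradient f (ymax ε)‖ * ‖gradient f x‖) • ((ymax ε - x) - (ε / ‖gradient f x‖) • gradient f x)‖ := by rw [h7]; ring
      _ = ‖(‖gradient f x‖ * ‖ymax ε - x‖) • (gradient f (ymax ε) - gradient f x)
            + (‖gradient f x‖ * ‖ymax ε - x‖ - ‖gradient f (ymax ε)‖ * ε) • (gradient f x)‖ := by rw [hid]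
      _ ≤ (‖gradient f x‖ * ‖ymax ε - x‖) * ‖gradient f (ymax ε) - (gradient f x)‖
            + |‖gradient f x‖ * ‖ymax ε - x‖ - ‖gradient f (ymax ε)‖ * ε| * ‖gradient f x‖ := h8
      _ ≤ (‖gradient f x‖ * ε) * (L * ε) + (3 * L * ε ^ 2) * ‖gradient f x‖ := by
          have hm1 : ‖gradient f x‖ * ‖ymax ε - x‖ * ‖gradient f (ymax ε) - gradient f x‖
              ≤ ‖gradient f x‖ * ε * (L * ε) :=
            mul_le_mul (mul_le_mul_of_nonneg_left hun hG.le) hpg (norm_nonneg _)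
              (by positivity)
          have hm2 := mul_le_mul_of_nonneg_right h9 hG.le
          linarith
      _ = 4 * L * ε ^ 2 * ‖gradient f x‖ := by ring
  have hgoal : ‖(ymax ε - x) - (ε / ‖gradient f x‖) • (gradient f x)‖ ≤ 8 * L / ‖gradient f x‖ * ε ^ 2 := by
    rw [div_mul_eq_mul_div, le_div_iff₀ hG]
    nlinarith [hfinal, hpn, hG, norm_nonneg ((ymax ε - x) - (ε / ‖gradient f x‖) • gradient f x),
      mul_le_mul_of_nonneg_right (mul_le_mul_of_nonneg_left hpn
        (norm_nonneg ((ymax ε - x) - (ε / ‖gradient f x‖) • gradient f x))) hG.le]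
  have hrw3 : ymax ε - (x + (ε / ‖gradient f x‖) • gradient f x) = (ymax ε - x) - (ε / ‖gradient f x‖) • gradient f x := by abel
  rw [hrw3, Real.norm_eq_abs (ε ^ 2), abs_of_nonneg (by positivity)]
  exact hgoal
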